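/- Let h : [0,∞) → ℝ be continuous and strictly positive, and for s ≥ 0 and t > 0 define HM(t,s) = ((1/t)∫ₛ^{s+t} (1/h(u)) du)⁻¹. Then h is monotone non-decreasing (respectively non-increasing) on [0,∞) if and only if for every s ≥ 0 the map t ↦ HM(t,s) is monotone non-decreasing (respectively non-increasing) on (0,∞), i.e., HM(t₂,s) ≥ HM(t₁,s) (respectively ≤) whenever t₂ ≥ t₁ > 0. -/

import Mathlib

open Set MeasureTheory

private lemma myIntInt (g : ℝ → ℝ) (hg : ContinuousOn g (Set.Ici 0))
    {a b : ℝ} (ha : 0 ≤ a) (hab : a ≤ b) : IntervalIntegrable g volume a b := by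
  apply ContinuousOn.intervalIntegrable
  rw [Set.uIcc_of_le hab]
  exact hg.mono (fun u hu => le_trans ha hu.1)

/-- Forward: antitone g implies averages antitone in t. -/
private lemma avg_anti (g : ℝ → ℝ) (hg : ContinuousOn g (Set.Ici 0))
    (hmono : AntitoneOn g (Set.Ici 0)) (s : ℝ) (hs : 0 ≤ s) :
    AntitoneOn (fun t => (1/t) * ∫ u in s..(s+t), g u) (Set.Ioi 0) := by
  intro t₁ ht₁ t₂ ht₂ h12
  simp only
  have ht₁' : (0:ℝ) < t₁ := ht₁
  have ht₂' : (0:ℝ) < t₂ := ht₂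
  have hint1 : IntervalIntegrable g volume s (s+t₁) := myIntInt g hg hs (by linarith)
  have hint2 : IntervalIntegrable g volume (s+t₁) (s+t₂) :=
    myIntInt g hg (by linarith) (by linarith)
  have hsplit : (∫ u in s..(s+t₂), g u)
      = (∫ u in s..(s+t₁), g u) + ∫ u in (s+t₁)..(s+t₂), g u :=
    (intervalIntegral.integral_add_adjacent_intervals hint1 hint2).symm
  set c := g (s + t₁) with hc
  have hF1 : t₁ * c ≤ ∫ u in s..(s+t₁), g u := by
    have h1 : (∫ u in s..(s+t₁), (fun _ => c) u) ≤ ∫ u in s..(s+t₁), g u := by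
      apply intervalIntegral.integral_mono_on (by linarith) intervalIntegrable_const hint1
      intro u hu
      exact hmono (show u ∈ Set.Ici (0:ℝ) from le_trans hs hu.1)
        (show s + t₁ ∈ Set.Ici (0:ℝ) by simp; linarith) hu.2
    rw [intervalIntegral.integral_const] at h1
    simpa [mul_comm] using h1
  have hT : (∫ u in (s+t₁)..(s+t₂), g u) ≤ (t₂ - t₁) * c := by
    have h1 : (∫ u in (s+t₁)..(s+t₂), g u) ≤ ∫ u in (s+t₁)..(s+t₂), (fun _ => c) u := by
      apply intervalIntegral.integral_mono_on (by linarith) hint2 intervalIntegrable_const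
      intro u hu
      exact hmono (show s + t₁ ∈ Set.Ici (0:ℝ) by simp; linarith)
        (show u ∈ Set.Ici (0:ℝ) from le_trans (by linarith) hu.1) hu.1
    rw [intervalIntegral.integral_const] at h1
    calc (∫ u in (s+t₁)..(s+t₂), g u) ≤ (s + t₂ - (s + t₁)) • c := h1
    _ = (t₂ - t₁) * c := by ring_nf
  rw [one_div, one_div, inv_mul_eq_div, inv_mul_eq_div, div_le_div_iff₀ ht₂' ht₁']
  rw [hsplit]
  nlinarith [mul_le_mul_of_nonneg_left hT (le_of_lt ht₁'),
    mul_le_mul_of_nonneg_left hF1 (sub_nonneg.mpr h12)]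

/-- From antitone averages, the integral is bounded by t * g s. -/
private lemma int_le_of_avg_anti (g : ℝ → ℝ) (hg : ContinuousOn g (Set.Ici 0))
    (H : ∀ s ≥ (0:ℝ), AntitoneOn (fun t => (1/t) * ∫ u in s..(s+t), g u) (Set.Ioi 0))
    (s : ℝ) (hs : 0 ≤ s) (t : ℝ) (ht : 0 < t) :
    (∫ u in s..(s+t), g u) ≤ t * g s := by
  have key : (1/t) * (∫ u in s..(s+t), g u) ≤ g s := by
    apply le_of_forall_pos_le_add
    intro ε hε
    obtain ⟨δ, hδ, hδ'⟩ := Metric.continuousWithinAt_iff.mp (hg s hs) ε hε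
    set t' := min t (δ/2) with ht'def
    have ht' : 0 < t' := lt_min ht (by linarith)
    have ht'le : t' ≤ t := min_le_left _ _
    have hbound : ∀ u ∈ Set.Icc s (s + t'), g u ≤ g s + ε := by
      intro u hu
      have hdist : dist u s < δ := by
        rw [Real.dist_eq, abs_of_nonneg (by linarith [hu.1])]
        have : u ≤ s + t' := hu.2
        have : t' ≤ δ/2 := min_le_right _ _
        linarith [hu.2]
      have := hδ' (show u ∈ Set.Ici (0:ℝ) from le_trans hs hu.1) hdist
      rw [Real.dist_eq] at this
      have := abs_lt.mp this
      linarith [this.1, this.2]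
    have hint : IntervalIntegrable g volume s (s+t') := myIntInt g hg hs (by linarith)
    have hineq : (∫ u in s..(s+t'), g u) ≤ t' * (g s + ε) := by
      have h1 : (∫ u in s..(s+t'), g u) ≤ ∫ u in s..(s+t'), (fun _ => g s + ε) u := by
        apply intervalIntegral.integral_mono_on (by linarith) hint intervalIntegrable_const
        exact hbound
      rw [intervalIntegral.integral_const] at h1
      calc (∫ u in s..(s+t'), g u) ≤ (s + t' - s) • (g s + ε) := h1
      _ = t' * (g s + ε) := by rw [smul_eq_mul]; ring_nf
    have havg : (1/t) * (∫ u in s..(s+t), g u) ≤ (1/t') * (∫ u in s..(s+t'), g u) :=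
      H s hs (show t' ∈ Set.Ioi (0:ℝ) from ht') (show t ∈ Set.Ioi (0:ℝ) from ht) ht'le
    calc (1/t) * (∫ u in s..(s+t), g u) ≤ (1/t') * (∫ u in s..(s+t'), g u) := havg
    _ ≤ (1/t') * (t' * (g s + ε)) := by
        apply mul_le_mul_of_nonneg_left hineq (by positivity)
    _ = g s + ε := by field_simp
  calc (∫ u in s..(s+t), g u) = t * ((1/t) * (∫ u in s..(s+t), g u)) := by field_simp
  _ ≤ t * g s := mul_le_mul_of_nonneg_left key (le_of_lt ht)

/-- Converse: antitone averages implies antitone g. -/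
private lemma anti_of_avg_anti (g : ℝ → ℝ) (hg : ContinuousOn g (Set.Ici 0))
    (H : ∀ s ≥ (0:ℝ), AntitoneOn (fun t => (1/t) * ∫ u in s..(s+t), g u) (Set.Ioi 0)) :
    AntitoneOn g (Set.Ici 0) := by
  intro x hx y hy hxy
  by_contra hcon
  push_neg at hcon
  have hxy' : x < y := lt_of_le_of_ne hxy (by rintro rfl; exact lt_irrefl _ hcon)
  set A := {u : ℝ | u ∈ Set.Icc x y ∧ g u ≤ g x} with hAdef
  have hxA : x ∈ A := ⟨⟨le_refl x, le_of_lt hxy'⟩, le_refl _⟩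
  have hsub : A ⊆ Set.Icc x y := fun u hu => hu.1
  have hAeq : A = Set.Icc x y ∩ g ⁻¹' Set.Iic (g x) := by
    ext u; simp [hAdef, Set.mem_Icc, and_assoc]
  have hgc' : ContinuousOn g (Set.Icc x y) := hg.mono (fun u hu => le_trans hx hu.1)
  have hAclosed : IsClosed A := by
    rw [hAeq]
    exact hgc'.preimage_isClosed_of_isClosed isClosed_Icc isClosed_Iic
  have hAcomp : IsCompact A := isCompact_Icc.of_isClosed_subset hAclosed hsub
  set a := sSup A with hadef
  have haA : a ∈ A := hAcomp.sSup_mem ⟨x, hxA⟩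
  have hay : a ≤ y := haA.1.2
  have hxa : x ≤ a := haA.1.1
  have hay' : a < y := by
    rcases lt_or_eq_of_le hay with h | h
    · exact h
    · exfalso; rw [h] at haA; exact absurd haA.2 (not_le.mpr hcon)
  have hgt : ∀ u ∈ Set.Ioc a y, g x < g u := by
    intro u hu
    by_contra hle
    push_neg at hle
    have huA : u ∈ A := ⟨⟨le_trans hxa (le_of_lt hu.1), hu.2⟩, hle⟩
    exact absurd (le_csSup hAcomp.bddAbove huA) (not_le.mpr hu.1)
  have hga : (0:ℝ) ≤ a := le_trans hx hxa
  have hbound := int_le_of_avg_anti g hg H a hga (y - a) (by linarith)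
  have heq : a + (y - a) = y := by ring
  rw [heq] at hbound
  have hstrict : ((y - a) * g a) < ∫ u in a..y, g u := by
    have h1 : (∫ u in a..y, (fun _ => g a) u) < ∫ u in a..y, g u := by
      apply intervalIntegral.integral_lt_integral_of_continuousOn_of_le_of_exists_lt hay'
        continuousOn_const (hgc'.mono (Set.Icc_subset_Icc hxa (le_refl y)))
      · intro u hu
        exact le_trans haA.2 (le_of_lt (hgt u hu))
      · exact ⟨y, ⟨le_of_lt hay', le_refl y⟩, lt_of_le_of_lt haA.2 (hgt y ⟨hay', le_refl y⟩)⟩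
    rw [intervalIntegral.integral_const, smul_eq_mul] at h1
    exact h1
  linarith

/-- The central equivalence for antitone case. -/
private lemma key_iff (g : ℝ → ℝ) (hg : ContinuousOn g (Set.Ici 0)) :
    AntitoneOn g (Set.Ici 0) ↔
      ∀ s ≥ (0:ℝ), AntitoneOn (fun t => (1/t) * ∫ u in s..(s+t), g u) (Set.Ioi 0) :=
  ⟨fun hm s hs => avg_anti g hg hm s hs, fun H => anti_of_avg_anti g hg H⟩

theorem IFR_iff_HM_monotone_in_t
    (h : ℝ → ℝ) (hc : ContinuousOn h (Set.Ici 0))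
    (hpos : ∀ u ∈ Set.Ici (0 : ℝ), 0 < h u) :
    (MonotoneOn h (Set.Ici 0) ↔
      ∀ s ≥ (0:ℝ),
        MonotoneOn
          (fun t => ((1 / t) * ∫ u in s..(s + t), (h u)⁻¹)⁻¹)
          (Set.Ioi 0)) ∧
    (AntitoneOn h (Set.Ici 0) ↔
      ∀ s ≥ (0:ℝ),
        AntitoneOn
          (fun t => ((1 / t) * ∫ u in s..(s + t), (h u)⁻¹)⁻¹)
          (Set.Ioi 0)) := by
  set g : ℝ → ℝ := fun u => (h u)⁻¹ with hgdef
  have hgc : ContinuousOn g (Set.Ici 0) :=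
    ContinuousOn.inv₀ hc (fun u hu => (hpos u hu).ne')
  have hgpos : ∀ u ∈ Set.Ici (0:ℝ), 0 < g u := fun u hu => inv_pos.mpr (hpos u hu)
  -- positivity of averages
  have havgpos : ∀ s ≥ (0:ℝ), ∀ t ∈ Set.Ioi (0:ℝ),
      0 < (1/t) * ∫ u in s..(s+t), g u := by
    intro s hs t ht
    have ht' : (0:ℝ) < t := ht
    have hint : IntervalIntegrable g volume s (s+t) := myIntInt g hgc hs (by linarith)
    have hI : 0 < ∫ u in s..(s+t), g u := by
      apply intervalIntegral.intervalIntegral_pos_of_pos_on hint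
      · intro u hu
        exact hgpos u (le_trans hs (le_of_lt hu.1))
      · linarith
    positivity
  -- inverse flip on Ioi 0
  have hinvflip : ∀ (f : ℝ → ℝ), (∀ t ∈ Set.Ioi (0:ℝ), 0 < f t) →
      (AntitoneOn f (Set.Ioi 0) ↔ MonotoneOn (fun t => (f t)⁻¹) (Set.Ioi 0)) := by
    intro f hf
    constructor
    · intro ha t₁ ht₁ t₂ ht₂ h12
      exact inv_anti₀ (hf t₂ ht₂) (ha ht₁ ht₂ h12)
    · intro hm t₁ ht₁ t₂ ht₂ h12
      have h1 := hm ht₁ ht₂ h12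
      have h2 : ((f t₂)⁻¹)⁻¹ ≤ ((f t₁)⁻¹)⁻¹ :=
        inv_anti₀ (inv_pos.mpr (hf t₁ ht₁)) h1
      rwa [inv_inv, inv_inv] at h2
  have hmonflip : ∀ (f : ℝ → ℝ), (∀ t ∈ Set.Ioi (0:ℝ), 0 < f t) →
      (MonotoneOn f (Set.Ioi 0) ↔ AntitoneOn (fun t => (f t)⁻¹) (Set.Ioi 0)) := by
    intro f hf
    constructor
    · intro hm t₁ ht₁ t₂ ht₂ h12
      exact inv_anti₀ (hf t₁ ht₁) (hm ht₁ ht₂ h12)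
    · intro ha t₁ ht₁ t₂ ht₂ h12
      have h1 := ha ht₁ ht₂ h12
      have h2 : ((f t₁)⁻¹)⁻¹ ≤ ((f t₂)⁻¹)⁻¹ :=
        inv_anti₀ (inv_pos.mpr (hf t₂ ht₂)) h1
      rwa [inv_inv, inv_inv] at h2
  -- h mono iff g anti (on Ici 0)
  have hflip1 : MonotoneOn h (Set.Ici 0) ↔ AntitoneOn g (Set.Ici 0) := by
    constructor
    · intro hm x hx y hy hxy
      exact inv_anti₀ (hpos x hx) (hm hx hy hxy)
    · intro ha x hx y hy hxy
      have h1 : (h y)⁻¹ ≤ (h x)⁻¹ := ha hx hy hxy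
      have h2 : ((h x)⁻¹)⁻¹ ≤ ((h y)⁻¹)⁻¹ :=
        inv_anti₀ (inv_pos.mpr (hpos y hy)) h1
      rwa [inv_inv, inv_inv] at h2
  have hflip2 : AntitoneOn h (Set.Ici 0) ↔ MonotoneOn g (Set.Ici 0) := by
    constructor
    · intro ha x hx y hy hxy
      exact inv_anti₀ (hpos y hy) (ha hx hy hxy)
    · intro hm x hx y hy hxy
      have h1 : (h x)⁻¹ ≤ (h y)⁻¹ := hm hx hy hxy
      have h2 : ((h y)⁻¹)⁻¹ ≤ ((h x)⁻¹)⁻¹ :=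
        inv_anti₀ (inv_pos.mpr (hpos x hx)) h1
      rwa [inv_inv, inv_inv] at h2
  -- neg trick: MonotoneOn g iff AntitoneOn (-g)
  have hnegg : MonotoneOn g (Set.Ici 0) ↔ AntitoneOn (fun u => -g u) (Set.Ici 0) := by
    constructor
    · intro hm x hx y hy hxy
      simp only [neg_le_neg_iff]
      exact hm hx hy hxy
    · intro ha x hx y hy hxy
      have := ha hx hy hxy
      simpa using this
  have hnegc : ContinuousOn (fun u => -g u) (Set.Ici 0) := hgc.neg
  -- avg of -g equals -avg of g
  have havgneg : ∀ s t : ℝ, (1/t) * (∫ u in s..(s+t), -g u)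
      = -((1/t) * ∫ u in s..(s+t), g u) := by
    intro s t
    rw [intervalIntegral.integral_neg]
    ring
  have hnegavg : ∀ s : ℝ,
      (AntitoneOn (fun t => (1/t) * ∫ u in s..(s+t), -g u) (Set.Ioi 0) ↔
       MonotoneOn (fun t => (1/t) * ∫ u in s..(s+t), g u) (Set.Ioi 0)) := by
    intro s
    constructor
    · intro ha t₁ ht₁ t₂ ht₂ h12
      have := ha ht₁ ht₂ h12
      simp only [havgneg, neg_le_neg_iff] at this
      exact this
    · intro hm t₁ ht₁ t₂ ht₂ h12
      simp only [havgneg, neg_le_neg_iff]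
      exact hm ht₁ ht₂ h12
  constructor
  · -- IFR case
    rw [hflip1, key_iff g hgc]
    constructor
    · intro H s hs
      exact (hinvflip _ (fun t ht => havgpos s hs t ht)).mp (H s hs)
    · intro H s hs
      exact (hinvflip _ (fun t ht => havgpos s hs t ht)).mpr (H s hs)
  · -- DFR case
    rw [hflip2, hnegg, key_iff (fun u => -g u) hnegc]
    constructor
    · intro H s hs
      exact (hmonflip _ (fun t ht => havgpos s hs t ht)).mp ((hnegavg s).mp (H s hs))
    · intro H s hs
      exact (hnegavg s).mpr ((hmonflip _ (fun t ht => havgpos s hs t ht)).mpr (H s hs))
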